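/- For all m, n ∈ ℕ, all ν ∈ ℝ, and all x ∈ ℝ, ((m+1)_n / n!) · L_{m+n}^{(ν)}(x) = Σ_{k=0}^{min(n,m)} ((−x)^k / k!) · L_{n−k}^{(ν+k)}(x) · L_{m−k}^{(ν+n+k)}(x). -/

import Mathlib

open Finset

/-- Pochhammer symbol `(a)_j = a(a+1)⋯(a+j-1)`. -/
noncomputable def poch (a : ℝ) (j : ℕ) : ℝ := ∏ i ∈ Finset.range j, (a + i)

/-- Generalized Laguerre polynomial `L_n^{(ν)}(x)`. -/
noncomputable def laguerreL (n : ℕ) (ν : ℝ) (x : ℝ) : ℝ :=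
  ∑ k ∈ Finset.range (n + 1),
    (-1 : ℝ) ^ k * poch (ν + k + 1) (n - k) / (((n - k).factorial : ℝ) * (k.factorial : ℝ)) * x ^ k

open scoped fwdDiff

noncomputable def bin (Z : ℝ) (r : ℕ) : ℝ := poch (Z - r + 1) r / (r.factorial : ℝ)

lemma poch_zero (a : ℝ) : poch a 0 = 1 := by simp [poch]

lemma poch_succ (a : ℝ) (j : ℕ) : poch a (j+1) = poch a j * (a + j) := by
  simp [poch, Finset.prod_range_succ]

lemma poch_succ' (a : ℝ) (j : ℕ) : poch a (j+1) = a * poch (a+1) j := by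
  rw [poch, Finset.prod_range_succ', poch]
  push_cast
  rw [mul_comm]
  congr 1
  · ring
  · apply Finset.prod_congr rfl; intro i _; ring

lemma poch_add (a : ℝ) (j k : ℕ) : poch a (j+k) = poch a j * poch (a+j) k := by
  rw [poch, Finset.prod_range_add, poch, poch]
  congr 1
  apply Finset.prod_congr rfl; intro i _; push_cast; ring

lemma bin_zero (Z : ℝ) : bin Z 0 = 1 := by simp [bin, poch_zero]

lemma bin_pascal (Z : ℝ) (r : ℕ) : bin (Z+1) (r+1) = bin Z (r+1) + bin Z r := by
  have h1 : (Z + 1 - (↑(r+1) : ℝ) + 1) = Z - r + 1 := by push_cast; ring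
  have h2 : (Z - (↑(r+1) : ℝ) + 1) = Z - r := by push_cast; ring
  have e1 : poch (Z + 1 - (↑(r+1) : ℝ) + 1) (r+1) = poch (Z - r + 1) r * (Z + 1) := by
    rw [h1, poch_succ]; ring_nf
  have e2 : poch (Z - (↑(r+1) : ℝ) + 1) (r+1) = (Z - r) * poch (Z - r + 1) r := by
    rw [h2, poch_succ']
  rw [bin, bin, bin, e1, e2, Nat.factorial_succ]
  have hr : (r.factorial : ℝ) ≠ 0 := Nat.cast_ne_zero.2 r.factorial_ne_zero
  have hr1 : ((r+1 : ℕ) : ℝ) ≠ 0 := by positivity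
  field_simp
  push_cast
  ring

lemma fwd_bin (X : ℝ) (r : ℕ) :
    Δ_[1] (fun i : ℕ => bin (X + i) (r+1)) = fun i : ℕ => bin (X + i) r := by
  funext i
  have := bin_pascal (X + i) r
  simp only [fwdDiff]
  push_cast
  rw [show X + (↑i + 1) = (X + i) + 1 by ring, this]
  ring

lemma fwd_iter_bin (X : ℝ) (n p : ℕ) :
    (Δ_[1])^[p] (fun i : ℕ => bin (X + i) n)
      = fun i : ℕ => if p ≤ n then bin (X + i) (n - p) else 0 := by
  induction p generalizing n with
  | zero => simp
  | succ p ih =>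
    rw [Function.iterate_succ_apply]
    cases n with
    | zero =>
      have : Δ_[1] (fun i : ℕ => bin (X + i) 0) = fun _ : ℕ => (0:ℝ) := by
        funext i; simp [fwdDiff, bin_zero]
      rw [this]
      have : (Δ_[1])^[p] (fun _ : ℕ => (0:ℝ)) = fun _ : ℕ => (0:ℝ) := by
        apply Function.iterate_fixed
        funext i; simp [fwdDiff]
      rw [this]
      simp
    | succ r =>
      rw [fwd_bin, ih]
      funext i
      simp [Nat.succ_le_succ_iff, Nat.succ_sub_succ]

lemma fwd_iter_shift (g : ℕ → ℝ) (q : ℕ) :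
    (Δ_[1])^[q] (fun i => g (i+1)) = fun y => (Δ_[1])^[q] g (y+1) := by
  induction q generalizing g with
  | zero => simp
  | succ q ih =>
    rw [Function.iterate_succ_apply]
    have : Δ_[1] (fun i => g (i+1)) = fun i => Δ_[1] g (i+1) := by
      funext i; simp [fwdDiff]
    rw [this, ih]
    funext y
    rw [← Function.iterate_succ_apply]

lemma choose_succ_sum (j : ℕ) (T : ℕ → ℕ → ℝ) :
    ∑ i ∈ range (j+1+1), ((j+1).choose i : ℝ) * (T i (j+1-i))
      = (∑ i ∈ range (j+1), (j.choose i : ℝ) * (T (i+1) (j-i)))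
        + ∑ i ∈ range (j+1), (j.choose i : ℝ) * (T i (j-i+1)) := by
  rw [Finset.sum_range_succ' (fun i => ((j+1).choose i : ℝ) * (T i (j+1-i))) (j+1)]
  have e1 : ∀ i ∈ range (j+1), ((j+1).choose (i+1) : ℝ) * (T (i+1) (j+1-(i+1)))
      = (j.choose i : ℝ) * (T (i+1) (j-i)) + (j.choose (i+1) : ℝ) * (T (i+1) (j-i)) := by
    intro i hi
    have h : j+1-(i+1) = j - i := by omega
    rw [h, Nat.choose_succ_succ]
    push_cast; ring
  rw [Finset.sum_congr rfl e1, Finset.sum_add_distrib]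
  have hS' : ∑ i ∈ range (j+1+1), (j.choose i : ℝ) * (T i (j+1-i))
      = (∑ i ∈ range (j+1), (j.choose (i+1) : ℝ) * (T (i+1) (j-i)))
        + ((j.choose 0 : ℝ) * (T 0 (j+1))) := by
    rw [Finset.sum_range_succ' (fun i => (j.choose i : ℝ) * (T i (j+1-i))) (j+1)]
    congr 1
    apply Finset.sum_congr rfl
    intro i hi
    have h : j+1-(i+1) = j - i := by omega
    rw [h]
  have hS : ∑ i ∈ range (j+1+1), (j.choose i : ℝ) * (T i (j+1-i))
      = ∑ i ∈ range (j+1), (j.choose i : ℝ) * (T i (j-i+1)) := by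
    rw [Finset.sum_range_succ]
    simp only [Nat.choose_succ_self, Nat.cast_zero, zero_mul, add_zero]
    apply Finset.sum_congr rfl
    intro i hi
    simp only [mem_range] at hi
    have h : j+1-i = j-i+1 := by omega
    rw [h]
  have hch : ((j+1).choose 0 : ℝ) * (T 0 (j+1-0)) = (j.choose 0 : ℝ) * (T 0 (j+1)) := by norm_num
  rw [hch]
  linarith [hS' ▸ hS]

lemma leibniz (j : ℕ) (f g : ℕ → ℝ) (x : ℕ) :
    (Δ_[1])^[j] (fun i => f i * g i) x
      = ∑ i ∈ range (j+1), (j.choose i : ℝ) * ((Δ_[1])^[i] f x) * ((Δ_[1])^[j-i] g (x+i)) := by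
  induction j generalizing f g x with
  | zero => simp
  | succ j ih =>
    rw [Function.iterate_succ_apply]
    have step : Δ_[1] (fun i => f i * g i)
        = fun i => (Δ_[1] f) i * g (i+1) + f i * (Δ_[1] g) i := by
      funext i; simp only [fwdDiff]; ring
    rw [step]
    have sum_split : (Δ_[1])^[j] (fun i => (Δ_[1] f) i * g (i+1) + f i * (Δ_[1] g) i) x
        = (Δ_[1])^[j] (fun i => (Δ_[1] f) i * g (i+1)) x + (Δ_[1])^[j] (fun i => f i * (Δ_[1] g) i) x := by
      have := fwdDiff_iter_add (1:ℕ) (fun i => (Δ_[1] f) i * g (i+1)) (fun i => f i * (Δ_[1] g) i) j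
      have h2 : (fun i => (Δ_[1] f) i * g (i+1) + f i * (Δ_[1] g) i)
          = (fun i => (Δ_[1] f) i * g (i+1)) + (fun i => f i * (Δ_[1] g) i) := rfl
      rw [h2, this]; rfl
    rw [sum_split, ih (Δ_[1] f) (fun i => g (i+1)) x, ih f (Δ_[1] g) x]
    have eA : ∀ i ∈ range (j+1), (j.choose i : ℝ) * ((Δ_[1])^[i] (Δ_[1] f) x) * ((Δ_[1])^[j-i] (fun t => g (t+1)) (x+i))
        = (j.choose i : ℝ) * ((Δ_[1])^[i+1] f x) * ((Δ_[1])^[j-i] g (x+i+1)) := by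
      intro i _
      rw [fwd_iter_shift, ← Function.iterate_succ_apply]
    have eB : ∀ i ∈ range (j+1), (j.choose i : ℝ) * ((Δ_[1])^[i] f x) * ((Δ_[1])^[j-i] (Δ_[1] g) (x+i))
        = (j.choose i : ℝ) * ((Δ_[1])^[i] f x) * ((Δ_[1])^[j-i+1] g (x+i)) := by
      intro i _
      rw [← Function.iterate_succ_apply]
    rw [Finset.sum_congr rfl eA, Finset.sum_congr rfl eB]
    have h := (choose_succ_sum j (fun a b => ((Δ_[1])^[a] f x) * ((Δ_[1])^[b] g (x+a)))).symm
    simp only [← mul_assoc, ← add_assoc] at h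
    exact h

lemma binsplit (Z : ℝ) (m n : ℕ) :
    bin Z n * bin (Z + m) m = ((m+n).choose n : ℝ) * bin (Z + m) (m+n) := by
  have hcf : (m+n).choose n * n.factorial * m.factorial = (m+n).factorial := by
    have := Nat.choose_mul_factorial_mul_factorial (show n ≤ m+n by omega)
    rwa [show m+n-n = m by omega] at this
  have hfac : ((m+n).choose n : ℝ) * n.factorial * m.factorial = ((m+n).factorial : ℝ) := by
    exact_mod_cast congrArg (Nat.cast : ℕ → ℝ) hcf
  unfold bin
  have h1 : (Z + m - (↑(m+n) : ℝ) + 1) = Z - n + 1 := by push_cast; ring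
  have h2 : (Z + m - (↑m : ℝ) + 1) = Z + 1 := by push_cast; ring
  rw [h1, h2]
  have h3 : poch (Z - n + 1) (m+n) = poch (Z - n + 1) n * poch (Z + 1) m := by
    rw [show m+n = n+m by omega, poch_add]
    congr 2
    push_cast; ring
  rw [h3]
  have hn : (n.factorial : ℝ) ≠ 0 := Nat.cast_ne_zero.2 n.factorial_ne_zero
  have hm : (m.factorial : ℝ) ≠ 0 := Nat.cast_ne_zero.2 m.factorial_ne_zero
  have hmn : (((m+n).factorial : ℕ) : ℝ) ≠ 0 := Nat.cast_ne_zero.2 (m+n).factorial_ne_zero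
  field_simp
  linear_combination (-(poch (Z - ↑n + 1) n * poch (Z + 1) m)) * hfac

lemma poch_natcast (m n : ℕ) :
    (m.factorial : ℝ) * poch ((m : ℝ)+1) n = ((m+n).factorial : ℝ) := by
  induction n with
  | zero => simp [poch_zero]
  | succ n ih =>
    rw [poch_succ, ← mul_assoc, ih, show m+(n+1) = (m+n)+1 by omega, Nat.factorial_succ]
    push_cast; ring

lemma bn_eq (m n : ℕ) :
    poch ((m : ℝ)+1) n / (n.factorial : ℝ) = ((m+n).choose n : ℝ) := by
  have hcf : (m+n).choose n * n.factorial * m.factorial = (m+n).factorial := by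
    have := Nat.choose_mul_factorial_mul_factorial (show n ≤ m+n by omega)
    rwa [show m+n-n = m by omega] at this
  have hfac : ((m+n).choose n : ℝ) * n.factorial * m.factorial = ((m+n).factorial : ℝ) := by
    exact_mod_cast congrArg (Nat.cast : ℕ → ℝ) hcf
  have h := poch_natcast m n
  have hn : (n.factorial : ℝ) ≠ 0 := Nat.cast_ne_zero.2 n.factorial_ne_zero
  have hm : (m.factorial : ℝ) ≠ 0 := Nat.cast_ne_zero.2 m.factorial_ne_zero
  rw [div_eq_iff hn]
  have h2 : (m.factorial:ℝ) * poch ((m:ℝ)+1) n = (m.factorial:ℝ) * (((m+n).choose n : ℝ) * (n.factorial:ℝ)) := by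
    linear_combination h - hfac
  exact mul_left_cancel₀ hm h2

lemma canon (m n j : ℕ) (X : ℝ) :
    ((m+n).choose n : ℝ) * (if j ≤ m+n then bin (X+m) (m+n-j) else 0)
      = ∑ i ∈ range (j+1), (j.choose i : ℝ) * (if i ≤ n then bin X (n-i) else 0) *
          ∑ d ∈ range (i+1), (i.choose d : ℝ) *
            (if d+(j-i) ≤ m then bin (X+m) (m-(d+(j-i))) else 0) := by
  have hFG : (fun i : ℕ => bin (X+i) n * bin ((X+m)+i) m)
      = (((m+n).choose n : ℝ)) • (fun i : ℕ => bin ((X+m)+i) (m+n)) := by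
    funext i
    have h := binsplit (X+i) m n
    have e : (X+(i:ℝ))+(m:ℝ) = (X+(m:ℝ))+(i:ℝ) := by ring
    rw [e] at h
    simpa using h
  have L1 : (Δ_[1])^[j] (fun i : ℕ => bin (X+i) n * bin ((X+m)+i) m) 0
      = ((m+n).choose n : ℝ) * (if j ≤ m+n then bin (X+m) (m+n-j) else 0) := by
    rw [hFG, fwdDiff_iter_const_smul, fwd_iter_bin]
    simp
  rw [← L1, leibniz j (fun i : ℕ => bin (X+i) n) (fun i : ℕ => bin ((X+m)+i) m) 0]
  apply Finset.sum_congr rfl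
  intro i hi
  simp only [mem_range] at hi
  have h1 : (Δ_[1])^[i] (fun i : ℕ => bin (X+i) n) 0 = (if i ≤ n then bin X (n-i) else 0) := by
    rw [fwd_iter_bin]
    simp
  have h2 : (Δ_[1])^[j-i] (fun t : ℕ => bin ((X+m)+t) m) (0+i)
      = ∑ d ∈ range (i+1), (i.choose d : ℝ) *
          (if d+(j-i) ≤ m then bin (X+m) (m-(d+(j-i))) else 0) := by
    have hGN := shift_eq_sum_fwdDiff_iter (1:ℕ)
      ((Δ_[1])^[j-i] (fun t : ℕ => bin ((X+m)+t) m)) i 0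
    rw [show (0 + i • 1 : ℕ) = 0 + i by simp] at hGN
    rw [hGN]
    apply Finset.sum_congr rfl
    intro d _
    have h3 : (Δ_[1])^[d] ((Δ_[1])^[j-i] (fun t : ℕ => bin ((X+m)+t) m)) 0
        = (Δ_[1])^[d+(j-i)] (fun t : ℕ => bin ((X+m)+t) m) 0 :=
      congrFun ((Function.iterate_add_apply (Δ_[1]) d (j-i) _).symm) 0
    rw [h3, fwd_iter_bin]
    simp [nsmul_eq_mul]
  rw [h1, h2]

lemma helper1 (A B : ℕ) (W : ℕ → ℝ) :
    (∑ k ∈ range (A+1), if k ≤ B then W k else 0) = ∑ k ∈ range (min A B + 1), W k := by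
  rw [← Finset.sum_filter]
  congr 1
  ext k
  simp only [mem_filter, mem_range]
  omega

noncomputable def ubin (X : ℝ) (n : ℕ) (p : ℕ) : ℝ := if p ≤ n then bin X (n-p) else 0

noncomputable def Wfun (m n j : ℕ) (X : ℝ) (k : ℕ) : ℝ :=
  ∑ a ∈ range ((j-k)+1),
    (1/((k.factorial : ℝ) * (a.factorial : ℝ) * (((j-k)-a).factorial : ℝ))) *
      ubin X n (k+a) * ubin (X+(m:ℝ)) m (j-a)

lemma hc1L (n k a : ℕ) (ν : ℝ) (hkn : k ≤ n) :
    (if a ≤ n-k then (-1:ℝ)^a * poch ((ν+k)+a+1) ((n-k)-a) /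
      ((((n-k)-a).factorial : ℝ) * (a.factorial : ℝ)) else 0)
      = (-1:ℝ)^a / (a.factorial : ℝ) * ubin (ν+(n:ℝ)) n (k+a) := by
  unfold ubin
  by_cases h1 : a ≤ n-k
  · rw [if_pos h1, if_pos (by omega : k+a ≤ n), show (n-k)-a = n-(k+a) by omega, bin]
    have harg : (ν+(n:ℝ)) - ((n-(k+a) : ℕ) : ℝ) + 1 = (ν+(k:ℝ))+(a:ℝ)+1 := by
      rw [Nat.cast_sub (by omega : k+a ≤ n)]
      push_cast
      ring
    rw [harg]
    ring
  · rw [if_neg h1, if_neg (by omega : ¬ k+a ≤ n)]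
    simp

lemma hc2L (m n j k a : ℕ) (ν : ℝ) (hkm : k ≤ m) (hkj : k ≤ j) (haj : a ≤ j-k) :
    (if (j-k)-a ≤ m-k then (-1:ℝ)^((j-k)-a) *
      poch ((ν+(n:ℝ)+k)+(((j-k)-a : ℕ) : ℝ)+1) ((m-k)-((j-k)-a)) /
      ((((m-k)-((j-k)-a)).factorial : ℝ) * (((j-k)-a).factorial : ℝ)) else 0)
      = (-1:ℝ)^((j-k)-a) / ((((j-k)-a).factorial : ℝ)) * ubin (ν+(n:ℝ)+(m:ℝ)) m (j-a) := by
  unfold ubin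
  by_cases h2 : (j-k)-a ≤ m-k
  · rw [if_pos h2, if_pos (by omega : j-a ≤ m), show (m-k)-((j-k)-a) = m-(j-a) by omega, bin]
    have harg : (ν+(n:ℝ)+(m:ℝ)) - ((m-(j-a) : ℕ) : ℝ) + 1
        = (ν+(n:ℝ)+(k:ℝ))+(((j-k)-a : ℕ) : ℝ)+1 := by
      rw [Nat.cast_sub (by omega : j-a ≤ m), Nat.cast_sub (by omega : a ≤ j),
        Nat.cast_sub (by omega : a ≤ j-k), Nat.cast_sub (by omega : k ≤ j)]
      ring
    rw [harg]
    ring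
  · rw [if_neg h2, if_neg (by omega : ¬ j-a ≤ m)]
    simp

lemma hcoefL (i d j : ℕ) (hdi : d ≤ i) (hij : i ≤ j) :
    ((j.choose i : ℝ) * (i.choose d : ℝ) / (j.factorial : ℝ))
      = 1/((d.factorial : ℝ) * ((i-d).factorial : ℝ) * ((j-i).factorial : ℝ)) := by
  have e1 : i.choose d * d.factorial * (i-d).factorial = i.factorial :=
    Nat.choose_mul_factorial_mul_factorial hdi
  have e2 : j.choose i * i.factorial * (j-i).factorial = j.factorial :=
    Nat.choose_mul_factorial_mul_factorial hij
  have e1' : (i.choose d : ℝ) * (d.factorial : ℝ) * ((i-d).factorial : ℝ) = (i.factorial : ℝ) := by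
    exact_mod_cast congrArg (Nat.cast : ℕ → ℝ) e1
  have e2' : (j.choose i : ℝ) * (i.factorial : ℝ) * ((j-i).factorial : ℝ) = (j.factorial : ℝ) := by
    exact_mod_cast congrArg (Nat.cast : ℕ → ℝ) e2
  have hj' : (j.factorial : ℝ) ≠ 0 := Nat.cast_ne_zero.2 j.factorial_ne_zero
  have hprod : ((d.factorial : ℝ) * ((i-d).factorial : ℝ) * ((j-i).factorial : ℝ)) ≠ 0 := by
    positivity
  rw [div_eq_div_iff hj' hprod]
  linear_combination (j.choose i : ℝ) * ((j-i).factorial : ℝ) * e1' + e2'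

lemma Wzero (m n j : ℕ) (X : ℝ) (k : ℕ) (hkj : k ≤ j) (hmin : min n m < k) :
    Wfun m n j X k = 0 := by
  unfold Wfun
  apply Finset.sum_eq_zero
  intro a ha
  simp only [mem_range] at ha
  by_cases hn' : k ≤ n
  · have : ubin (X+(m:ℝ)) m (j-a) = 0 := by
      unfold ubin
      rw [if_neg (by omega : ¬ j-a ≤ m)]
    rw [this]; ring
  · have : ubin X n (k+a) = 0 := by
      unfold ubin
      rw [if_neg (by omega : ¬ k+a ≤ n)]
    rw [this]; ring

lemma goalj (m n j : ℕ) (ν : ℝ) :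
    ((m+n).choose n : ℝ) *
      (if j ≤ m+n then (-1:ℝ)^j * poch (ν+j+1) (m+n-j) /
        (((m+n-j).factorial : ℝ) * (j.factorial : ℝ)) else 0)
      = ∑ k ∈ range (min n m + 1),
          (if k ≤ j then
            ((-1:ℝ)^k / (k.factorial : ℝ)) *
            ∑ a ∈ range ((j-k)+1),
              (if a ≤ n-k then (-1:ℝ)^a * poch ((ν+k)+a+1) ((n-k)-a) /
                ((((n-k)-a).factorial : ℝ) * (a.factorial : ℝ)) else 0) *
              (if (j-k)-a ≤ m-k then (-1:ℝ)^((j-k)-a) *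
                poch ((ν+(n:ℝ)+k)+(((j-k)-a : ℕ) : ℝ)+1) ((m-k)-((j-k)-a)) /
                ((((m-k)-((j-k)-a)).factorial : ℝ) * (((j-k)-a).factorial : ℝ)) else 0)
          else 0) := by
  have step1 : ∀ k ∈ range (min n m + 1),
      (if k ≤ j then
        ((-1:ℝ)^k / (k.factorial : ℝ)) *
        ∑ a ∈ range ((j-k)+1),
          (if a ≤ n-k then (-1:ℝ)^a * poch ((ν+k)+a+1) ((n-k)-a) /
            ((((n-k)-a).factorial : ℝ) * (a.factorial : ℝ)) else 0) *
          (if (j-k)-a ≤ m-k then (-1:ℝ)^((j-k)-a) *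
            poch ((ν+(n:ℝ)+k)+(((j-k)-a : ℕ) : ℝ)+1) ((m-k)-((j-k)-a)) /
            ((((m-k)-((j-k)-a)).factorial : ℝ) * (((j-k)-a).factorial : ℝ)) else 0)
      else 0)
      = (if k ≤ j then (-1:ℝ)^j * Wfun m n j (ν+(n:ℝ)) k else 0) := by
    intro k hk
    simp only [mem_range] at hk
    have hkn : k ≤ n := by omega
    have hkm : k ≤ m := by omega
    by_cases hkj : k ≤ j
    · rw [if_pos hkj, if_pos hkj]
      unfold Wfun
      rw [Finset.mul_sum, Finset.mul_sum]
      apply Finset.sum_congr rfl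
      intro a ha
      simp only [mem_range] at ha
      rw [hc1L n k a ν hkn, hc2L m n j k a ν hkm hkj (by omega : a ≤ j-k)]
      have hsign : (-1:ℝ)^j = (-1:ℝ)^k * (-1:ℝ)^a * (-1:ℝ)^((j-k)-a) := by
        rw [← pow_add, ← pow_add]
        congr 1
        omega
      rw [hsign]
      ring
    · rw [if_neg hkj, if_neg hkj]
  rw [Finset.sum_congr rfl step1,
    helper1 (min n m) j (fun k => (-1:ℝ)^j * Wfun m n j (ν+(n:ℝ)) k)]
  have ext2 : ∑ k ∈ range (min (min n m) j + 1), ((-1:ℝ)^j * Wfun m n j (ν+(n:ℝ)) k)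
      = ∑ k ∈ range (j+1), ((-1:ℝ)^j * Wfun m n j (ν+(n:ℝ)) k) := by
    apply Finset.sum_subset
    · intro k hk
      simp only [mem_range] at *
      omega
    · intro k hk hnk
      simp only [mem_range] at hk hnk
      rw [Wzero m n j (ν+(n:ℝ)) k (by omega) (by omega)]
      ring
  rw [ext2]
  have lhs_eq : ((m+n).choose n : ℝ) *
      (if j ≤ m+n then (-1:ℝ)^j * poch (ν+j+1) (m+n-j) /
        (((m+n-j).factorial : ℝ) * (j.factorial : ℝ)) else 0)
      = (-1:ℝ)^j * ((1/(j.factorial : ℝ)) *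
        (((m+n).choose n : ℝ) * (if j ≤ m+n then bin ((ν+(n:ℝ))+(m:ℝ)) (m+n-j) else 0))) := by
    by_cases hj : j ≤ m+n
    · rw [if_pos hj, if_pos hj, bin]
      have harg : (ν+(n:ℝ))+(m:ℝ) - ((m+n-j : ℕ) : ℝ) + 1 = ν+(j:ℝ)+1 := by
        rw [Nat.cast_sub (by omega : j ≤ m+n)]
        push_cast
        ring
      rw [harg]
      ring
    · rw [if_neg hj, if_neg hj]
      ring
  rw [lhs_eq, canon m n j (ν+(n:ℝ)), ← Finset.mul_sum]
  congr 1
  -- goal: (1/j!) * (∑ i ...) = ∑ k, Wfun ... k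
  rw [Finset.mul_sum]
  have expand : ∀ i ∈ range (j+1),
      (1/(j.factorial : ℝ)) * ((j.choose i : ℝ) * (if i ≤ n then bin (ν+(n:ℝ)) (n-i) else 0) *
        ∑ d ∈ range (i+1), (i.choose d : ℝ) *
          (if d+(j-i) ≤ m then bin ((ν+(n:ℝ))+(m:ℝ)) (m-(d+(j-i))) else 0))
      = ∑ d ∈ range (i+1), ((j.choose i : ℝ) * (i.choose d : ℝ) / (j.factorial : ℝ)) *
          ubin (ν+(n:ℝ)) n i * ubin ((ν+(n:ℝ))+(m:ℝ)) m (d+(j-i)) := by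
    intro i _
    rw [Finset.mul_sum, Finset.mul_sum]
    apply Finset.sum_congr rfl
    intro d _
    unfold ubin
    ring
  rw [Finset.sum_congr rfl expand]
  rw [Finset.sum_sigma' (range (j+1)) (fun i => range (i+1))
    (fun i d => ((j.choose i : ℝ) * (i.choose d : ℝ) / (j.factorial : ℝ)) *
      ubin (ν+(n:ℝ)) n i * ubin ((ν+(n:ℝ))+(m:ℝ)) m (d+(j-i)))]
  unfold Wfun
  rw [Finset.sum_sigma' (range (j+1)) (fun k => range ((j-k)+1))
    (fun k a => (1/((k.factorial : ℝ) * (a.factorial : ℝ) * (((j-k)-a).factorial : ℝ))) *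
      ubin (ν+(n:ℝ)) n (k+a) * ubin ((ν+(n:ℝ))+(m:ℝ)) m (j-a))]
  refine Finset.sum_bij' (fun (p : Σ _ : ℕ, ℕ) _ => (⟨p.2, p.1 - p.2⟩ : Σ _ : ℕ, ℕ))
    (fun (q : Σ _ : ℕ, ℕ) _ => (⟨q.1 + q.2, q.1⟩ : Σ _ : ℕ, ℕ)) ?_ ?_ ?_ ?_ ?_
  · intro p hp
    obtain ⟨x, y⟩ := p
    rw [Finset.mem_sigma] at hp ⊢
    simp only [mem_range] at hp ⊢
    omega
  · intro q hq
    obtain ⟨x, y⟩ := q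
    rw [Finset.mem_sigma] at hq ⊢
    simp only [mem_range] at hq ⊢
    omega
  · intro p hp
    simp only [Finset.mem_sigma, mem_range] at hp
    obtain ⟨i, d⟩ := p
    simp only [] at hp ⊢
    congr
    omega
  · intro q hq
    simp only [Finset.mem_sigma, mem_range] at hq
    obtain ⟨k, a⟩ := q
    simp only [] at hq ⊢
    congr
    omega
  · intro p hp
    simp only [Finset.mem_sigma, mem_range] at hp
    obtain ⟨i, d⟩ := p
    simp only [] at hp ⊢
    rw [show (j-d)-(i-d) = j-i by omega, show d+(i-d) = i by omega,
      show j-(i-d) = d+(j-i) by omega, hcoefL i d j (by omega) (by omega)]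

noncomputable def lagP (n : ℕ) (ν : ℝ) : Polynomial ℝ :=
  ∑ k ∈ Finset.range (n + 1),
    Polynomial.C ((-1 : ℝ) ^ k * poch (ν + k + 1) (n - k) /
      (((n - k).factorial : ℝ) * (k.factorial : ℝ))) * Polynomial.X ^ k

lemma lagP_eval (n : ℕ) (ν x : ℝ) : (lagP n ν).eval x = laguerreL n ν x := by
  unfold lagP laguerreL
  rw [Polynomial.eval_finset_sum]
  apply Finset.sum_congr rfl
  intro k _
  simp

lemma lagP_coeff (n : ℕ) (ν : ℝ) (j : ℕ) :
    (lagP n ν).coeff j = if j ≤ n then (-1:ℝ)^j * poch (ν+j+1) (n-j) /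
      (((n-j).factorial : ℝ) * (j.factorial : ℝ)) else 0 := by
  unfold lagP
  rw [Polynomial.finset_sum_coeff]
  simp only [Polynomial.coeff_C_mul, Polynomial.coeff_X_pow, mul_ite, mul_one, mul_zero]
  rw [Finset.sum_ite_eq (range (n+1)) j
    (fun k => (-1:ℝ)^k * poch (ν+k+1) (n-k) / (((n-k).factorial : ℝ) * (k.factorial : ℝ)))]
  simp [Nat.lt_succ_iff]

lemma key (m n : ℕ) (ν : ℝ) :
    Polynomial.C (((m+n).choose n : ℝ)) * lagP (m+n) ν
      = ∑ k ∈ range (min n m + 1),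
          Polynomial.C ((-1:ℝ)^k / (k.factorial : ℝ)) *
            (lagP (n-k) (ν+k) * lagP (m-k) (ν+(n:ℝ)+k)) * Polynomial.X^k := by
  apply Polynomial.ext
  intro j
  rw [Polynomial.coeff_C_mul, lagP_coeff, Polynomial.finset_sum_coeff]
  have perk : ∀ k ∈ range (min n m + 1),
      (Polynomial.C ((-1:ℝ)^k / (k.factorial : ℝ)) *
        (lagP (n-k) (ν+k) * lagP (m-k) (ν+(n:ℝ)+k)) * Polynomial.X^k).coeff j
      = (if k ≤ j then
          ((-1:ℝ)^k / (k.factorial : ℝ)) *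
          ∑ a ∈ range ((j-k)+1),
            (if a ≤ n-k then (-1:ℝ)^a * poch ((ν+k)+a+1) ((n-k)-a) /
              ((((n-k)-a).factorial : ℝ) * (a.factorial : ℝ)) else 0) *
            (if (j-k)-a ≤ m-k then (-1:ℝ)^((j-k)-a) *
              poch ((ν+(n:ℝ)+k)+(((j-k)-a : ℕ) : ℝ)+1) ((m-k)-((j-k)-a)) /
              ((((m-k)-((j-k)-a)).factorial : ℝ) * (((j-k)-a).factorial : ℝ)) else 0)
        else 0) := by
    intro k hk
    rw [Polynomial.coeff_mul_X_pow']
    by_cases hkj : k ≤ j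
    · rw [if_pos hkj, if_pos hkj, Polynomial.coeff_C_mul, Polynomial.coeff_mul,
        Finset.Nat.sum_antidiagonal_eq_sum_range_succ_mk]
      congr 1
      apply Finset.sum_congr rfl
      intro a _
      rw [lagP_coeff, lagP_coeff]
    · rw [if_neg hkj, if_neg hkj]
  rw [Finset.sum_congr rfl perk]
  exact goalj m n j ν

theorem burchnall_laguerre_expansion (m n : ℕ) (ν : ℝ) (x : ℝ) :
    poch ((m : ℝ) + 1) n / (n.factorial : ℝ) * laguerreL (m + n) ν x =
      ∑ k ∈ Finset.range (min n m + 1),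
        (-x) ^ k / (k.factorial : ℝ) * laguerreL (n - k) (ν + k) x *
          laguerreL (m - k) (ν + n + k) x := by
  have h := congrArg (Polynomial.eval x) (key m n ν)
  rw [Polynomial.eval_mul, Polynomial.eval_C, Polynomial.eval_finset_sum] at h
  rw [bn_eq m n]
  simp only [← lagP_eval]
  rw [h]
  apply Finset.sum_congr rfl
  intro k _
  rw [Polynomial.eval_mul, Polynomial.eval_mul, Polynomial.eval_mul, Polynomial.eval_pow,
    Polynomial.eval_C, Polynomial.eval_X]
  rw [neg_pow]
  ring
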